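/- arXiv:2307.15195 — 4 statements merged into one kernel-verified Lean document; each statement's English description precedes it below -/
import Mathlib

section
/- Let h be an orientation-preserving real-analytic diffeomorphism of the circle ℝ/ℤ, let α ∈ ℝ, and let g = h⁻¹ ∘ R_α ∘ h, where R_α(x) = x + α is the rigid rotation. Then the Borel probability measure μ on ℝ/ℤ with density (h'(x))² / ∫₀¹ (h'(t))² dt with respect to Lebesgue measure is a (-1)-measure for g: ∫ φ(x) dμ(x) = ∫ g'(g⁻¹(x)) φ(g⁻¹(x)) dμ(x) for every continuous function φ on ℝ/ℤ. -/
open MeasureTheory Filter Metric Set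

noncomputable section

/-- The circle ℝ/ℤ. -/
abbrev Circle1 : Type := AddCircle (1 : ℝ)

/-- The canonical representative in `[0,1)` of a point of the circle. -/
noncomputable def circleRep (x : Circle1) : ℝ :=
  (AddCircle.equivIco 1 0 x : ℝ)

/-- The circle map induced by a lift `F : ℝ → ℝ`. -/
noncomputable def inducedCircleMap (F : ℝ → ℝ) (x : Circle1) : Circle1 :=
  ((F (circleRep x) : ℝ) : Circle1)

/-- The derivative of the circle map at a circle point, computed via the lift. -/
noncomputable def circleDeriv (F : ℝ → ℝ) (x : Circle1) : ℝ :=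
  deriv F (circleRep x)

/-- A cubic critical circle map, described in terms of its lift `F`. -/
structure IsCubicCriticalCircleMap (F : ℝ → ℝ) : Prop where
  analytic : ∀ x : ℝ, AnalyticAt ℝ F x
  lift : ∀ x : ℝ, F (x + 1) = F x + 1
  strictMono : StrictMono F
  deriv_pos : ∀ x : ℝ, (∀ n : ℤ, x ≠ n) → 0 < deriv F x
  deriv_zero : deriv F 0 = 0
  deriv2_zero : iteratedDeriv 2 F 0 = 0
  deriv3_pos : 0 < iteratedDeriv 3 F 0

/-- The rotation number of a circle map given by a lift `F`. -/
noncomputable def rotationNumber (F : ℝ → ℝ) : ℝ :=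
  limUnder atTop (fun n : ℕ => F^[n] 0 / n)

/-- A (-1)-measure for a circle map with lift `F`. -/
def IsNegOneMeasure (F : ℝ → ℝ) (μ : Measure Circle1) : Prop :=
  IsProbabilityMeasure μ ∧
    ∀ φ : C(Circle1, ℝ),
      ∫ x, φ x ∂μ =
        ∫ x, circleDeriv F (Function.invFun (inducedCircleMap F) x) *
              φ (Function.invFun (inducedCircleMap F) x) ∂μ

/- Auxiliary lemmas -/

lemma periodic_int' {f : ℝ → ℝ} (hf : ∀ x, f (x + 1) = f x) (x : ℝ) (n : ℤ) :
    f (x + n) = f x := by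
  have h : Function.Periodic f 1 := hf
  simpa using (h.int_mul n) x

lemma coe_circleRep (x : Circle1) : ((circleRep x : ℝ) : Circle1) = x :=
  (AddCircle.equivIco 1 0).symm_apply_apply x

lemma circle_coe_eq {r s : ℝ} (h : (r : Circle1) = (s : Circle1)) : ∃ n : ℤ, r = s + n := by
  rw [QuotientAddGroup.eq_iff_sub_mem] at h
  obtain ⟨n, hn⟩ := AddSubgroup.mem_zmultiples_iff.mp h
  refine ⟨n, ?_⟩
  have : (n : ℝ) = r - s := by simpa using hn
  linarith

lemma coe_add_int (r : ℝ) (n : ℤ) : ((r + n : ℝ) : Circle1) = (r : Circle1) := by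
  have h1 : ((r + n : ℝ) : Circle1) - (r : Circle1) = (((n:ℝ) : ℝ) : Circle1) := by
    rw [← AddCircle.coe_sub]
    ring_nf
  have hz : (((n:ℝ)) : Circle1) = 0 := (AddCircle.coe_eq_zero_iff 1).mpr ⟨n, by simp⟩
  have h2 := h1.trans hz
  rwa [sub_eq_zero] at h2

lemma rep_eval {f : ℝ → ℝ} (hf : ∀ x, f (x + 1) = f x) (t : ℝ) :
    f (circleRep (t : Circle1)) = f t := by
  obtain ⟨n, hn⟩ := circle_coe_eq (coe_circleRep (t : Circle1))
  rw [hn, periodic_int' hf]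

theorem density_is_neg_one_measure_of_conjugate_to_rotation
    (H : ℝ → ℝ) (α : ℝ)
    (hHa : ∀ x : ℝ, AnalyticAt ℝ H x)
    (hHlift : ∀ x : ℝ, H (x + 1) = H x + 1)
    (hHpos : ∀ x : ℝ, 0 < deriv H x)
    (G : ℝ → ℝ)
    (hG : ∀ x : ℝ, H (G x) = H x + α)
    (μ : Measure Circle1)
    (hμ : μ = (volume : Measure Circle1).withDensity
        (fun x => ENNReal.ofReal
          ((deriv H (circleRep x)) ^ 2 / ∫ t in (0:ℝ)..1, (deriv H t) ^ 2))) :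
    IsNegOneMeasure G μ := by
  haveI : Fact ((0:ℝ) < 1) := ⟨one_pos⟩
  -- basic facts about H
  have hHd : Differentiable ℝ H := fun x => (hHa x).differentiableAt
  have hHc : Continuous H := hHd.continuous
  have hHsm : StrictMono H := strictMono_of_deriv_pos hHpos
  have hHcd : ContDiff ℝ 2 H := contDiff_iff_contDiffAt.mpr fun x => (hHa x).contDiffAt
  have hH'c : Continuous (deriv H) := hHcd.continuous_deriv one_le_two
  have hH'per : ∀ x, deriv H (x + 1) = deriv H x := by
    intro x
    have h1 : HasDerivAt (fun y => H (y + 1)) (deriv H (x + 1)) x := by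
      simpa [Function.comp_def] using (hHd (x + 1)).hasDerivAt.comp x ((hasDerivAt_id x).add_const 1)
    have h2 : HasDerivAt (fun y => H (y + 1)) (deriv H x) x := by
      simp_rw [hHlift]
      exact (hHd x).hasDerivAt.add_const 1
    exact h1.unique h2
  have hHliftZ : ∀ (x : ℝ) (n : ℤ), H (x + n) = H x + n := by
    intro x n
    have h := periodic_int' (f := fun z => H z - z) (by intro y; simp [hHlift]) x n
    linarith
  have hHsurj : Function.Surjective H := by
    apply hHc.surjective
    · apply Monotone.tendsto_atTop_atTop hHsm.monotone
      intro b
      refine ⟨(⌈b - H 0⌉ : ℤ), ?_⟩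
      have h := hHliftZ 0 ⌈b - H 0⌉
      rw [zero_add] at h
      rw [h]
      have := Int.le_ceil (b - H 0)
      linarith
    · apply Monotone.tendsto_atBot_atBot hHsm.monotone
      intro b
      refine ⟨(⌊b - H 0⌋ : ℤ), ?_⟩
      have h := hHliftZ 0 ⌊b - H 0⌋
      rw [zero_add] at h
      rw [h]
      have := Int.floor_le (b - H 0)
      linarith
  -- the inverse of H
  set e : ℝ ≃o ℝ := StrictMono.orderIsoOfSurjective H hHsm hHsurj with he
  have hee : ∀ x, e x = H x := fun _ => rfl
  set Hinv : ℝ → ℝ := fun y => e.symm y with hHinvdef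
  have hHinvc : Continuous Hinv := e.symm.continuous
  have hHinv : ∀ y, H (Hinv y) = y := by
    intro y
    have := e.apply_symm_apply y
    rwa [hee] at this
  have hinvH : ∀ x, Hinv (H x) = x := by
    intro x
    exact hHsm.injective (by rw [hHinv])
  -- facts about G
  have hGdef : ∀ x, G x = Hinv (H x + α) := by
    intro x
    apply hHsm.injective
    rw [hG, hHinv]
  have hGc : Continuous G := by
    have : Continuous fun x => Hinv (H x + α) := hHinvc.comp (hHc.add continuous_const)
    rwa [← funext hGdef] at this
  have hGsm : StrictMono G := by
    intro a b hab
    rw [← hHsm.lt_iff_lt, hG, hG]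
    have := hHsm hab
    linarith
  have hGlift : ∀ x, G (x + 1) = G x + 1 := by
    intro x
    apply hHsm.injective
    rw [hG, hHlift, hHlift, hG]
    ring
  have hGliftZ : ∀ (x : ℝ) (n : ℤ), G (x + n) = G x + n := by
    intro x n
    have h := periodic_int' (f := fun z => G z - z) (by intro y; simp [hGlift]) x n
    linarith
  set Ginv : ℝ → ℝ := fun y => Hinv (H y - α) with hGinvdef
  have hGinvc : Continuous Ginv := hHinvc.comp (hHc.sub continuous_const)
  have hGinv : ∀ y, G (Ginv y) = y := by
    intro y
    apply hHsm.injective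
    rw [hG]
    show H (Hinv (H y - α)) + α = H y
    rw [hHinv]; ring
  have hinvG : ∀ y, Ginv (G y) = y := by
    intro y
    show Hinv (H (G y) - α) = y
    rw [hG]
    simpa using hinvH y
  have hGinvlift : ∀ y, Ginv (y + 1) = Ginv y + 1 := by
    intro y
    apply hGsm.injective
    rw [hGinv, hGlift, hGinv]
  have hGinvliftZ : ∀ (y : ℝ) (n : ℤ), Ginv (y + n) = Ginv y + n := by
    intro y n
    have h := periodic_int' (f := fun z => Ginv z - z) (by intro z; simp [hGinvlift]) y n
    linarith
  -- derivatives
  have hHinvd : ∀ y, HasDerivAt Hinv (deriv H (Hinv y))⁻¹ y := by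
    intro y
    exact HasDerivAt.of_local_left_inverse hHinvc.continuousAt (hHd _).hasDerivAt
      (ne_of_gt (hHpos _)) (Filter.Eventually.of_forall hHinv)
  have hGd : ∀ x, HasDerivAt G (deriv H x / deriv H (G x)) x := by
    intro x
    have h1 : HasDerivAt (fun z => H z + α) (deriv H x) x := (hHd x).hasDerivAt.add_const α
    have h3 : HasDerivAt (fun x => Hinv (H x + α))
        ((deriv H (Hinv (H x + α)))⁻¹ * deriv H x) x := (hHinvd (H x + α)).comp x h1
    rw [← funext hGdef, ← hGdef x] at h3
    rw [div_eq_inv_mul]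
    exact h3
  have hG' : ∀ x, deriv G x = deriv H x / deriv H (G x) := fun x => (hGd x).deriv
  have hG'pos : ∀ x, 0 < deriv G x := fun x => by
    rw [hG']; exact div_pos (hHpos x) (hHpos _)
  have hG'c : Continuous (deriv G) := by
    have : Continuous fun x => deriv H x / deriv H (G x) :=
      hH'c.div (hH'c.comp hGc) fun x => ne_of_gt (hHpos _)
    rwa [← funext hG'] at this
  have hG'per : ∀ x, deriv G (x + 1) = deriv G x := by
    intro x
    rw [hG', hG', hH'per, hGlift, hH'per]
  -- the density
  set c := ∫ t in (0:ℝ)..1, (deriv H t) ^ 2 with hc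
  have hcpos : 0 < c :=
    intervalIntegral.intervalIntegral_pos_of_pos ((hH'c.pow 2).intervalIntegrable 0 1)
      (fun x => pow_pos (hHpos x) 2) one_pos
  set ρ : Circle1 → ℝ := fun x => (deriv H (circleRep x)) ^ 2 / c with hρ
  have hρnn : ∀ x, 0 ≤ ρ x := fun x => div_nonneg (sq_nonneg _) hcpos.le
  have hρc : Continuous ρ := by
    have h : ρ = AddCircle.liftIco 1 0 (fun t => (deriv H t) ^ 2 / c) := rfl
    rw [h]
    apply AddCircle.liftIco_zero_continuous
    · rw [show (1:ℝ) = 0 + 1 by ring, hH'per]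
    · exact ((hH'c.pow 2).div_const c).continuousOn
  have hρ_coe : ∀ t : ℝ, ρ ((t : ℝ) : Circle1) = (deriv H t) ^ 2 / c := fun t =>
    rep_eval (f := fun s => (deriv H s) ^ 2 / c) (fun y => by show deriv H (y+1) ^ 2 / c = _; rw [hH'per]) t
  have hμ2 : μ = (volume : Measure Circle1).withDensity
      (fun x => ((Real.toNNReal (ρ x) : NNReal) : ENNReal)) := by
    rw [hμ]
    rfl
  have hm : Measurable fun x : Circle1 => Real.toNNReal (ρ x) := hρc.measurable.real_toNNReal
  have hμ' : ∀ f : Circle1 → ℝ,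
      ∫ x, f x ∂μ = ∫ x, ρ x * f x ∂(volume : Measure Circle1) := by
    intro f
    rw [hμ2, integral_withDensity_eq_integral_smul hm f]
    congr 1
    funext x
    rw [NNReal.smul_def, Real.coe_toNNReal _ (hρnn x), smul_eq_mul]
  have hcirc : ∀ f : Circle1 → ℝ,
      ∫ x, f x ∂(volume : Measure Circle1) = ∫ t in (0:ℝ)..1, f ((t : ℝ) : Circle1) := by
    intro f
    have h := AddCircle.intervalIntegral_preimage 1 0 f
    rw [zero_add] at h
    exact h.symm
  have hρ_int : Integrable ρ (volume : Measure Circle1) :=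
    hρc.integrable_of_hasCompactSupport (HasCompactSupport.of_compactSpace _)
  have hprob : IsProbabilityMeasure μ := by
    constructor
    rw [hμ, withDensity_apply _ MeasurableSet.univ, Measure.restrict_univ]
    have h0 : (fun x : Circle1 => ENNReal.ofReal ((deriv H (circleRep x)) ^ 2 / c))
        = fun x => ENNReal.ofReal (ρ x) := rfl
    rw [h0, ← ofReal_integral_eq_lintegral_ofReal hρ_int (Filter.Eventually.of_forall hρnn)]
    rw [hcirc ρ, intervalIntegral.integral_congr (fun t _ => hρ_coe t),
      intervalIntegral.integral_div, ← hc, div_self (ne_of_gt hcpos)]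
    simp
  refine ⟨hprob, ?_⟩
  intro φ
  -- the circle maps
  have hg_coe : ∀ s : ℝ, inducedCircleMap G ((s : ℝ) : Circle1) = ((G s : ℝ) : Circle1) := by
    intro s
    show ((G (circleRep ((s:ℝ):Circle1)) : ℝ) : Circle1) = _
    obtain ⟨n, hn⟩ := circle_coe_eq (coe_circleRep ((s:ℝ) : Circle1))
    rw [hn, hGliftZ, coe_add_int]
  have hginv_coe : ∀ s : ℝ, inducedCircleMap Ginv ((s : ℝ) : Circle1) = ((Ginv s : ℝ) : Circle1) := by
    intro s
    show ((Ginv (circleRep ((s:ℝ):Circle1)) : ℝ) : Circle1) = _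
    obtain ⟨n, hn⟩ := circle_coe_eq (coe_circleRep ((s:ℝ) : Circle1))
    rw [hn, hGinvliftZ, coe_add_int]
  have hgginv : ∀ x, inducedCircleMap G (inducedCircleMap Ginv x) = x := by
    intro x
    conv_lhs => rw [← coe_circleRep x]
    rw [hginv_coe, hg_coe, hGinv, coe_circleRep]
  have hginvg : ∀ x, inducedCircleMap Ginv (inducedCircleMap G x) = x := by
    intro x
    conv_lhs => rw [← coe_circleRep x]
    rw [hg_coe, hginv_coe, hinvG, coe_circleRep]
  have hinj : Function.Injective (inducedCircleMap G) :=
    Function.LeftInverse.injective hginvg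
  have hinv_eq : Function.invFun (inducedCircleMap G) = inducedCircleMap Ginv := by
    funext x
    calc Function.invFun (inducedCircleMap G) x
        = Function.invFun (inducedCircleMap G) (inducedCircleMap G (inducedCircleMap Ginv x)) := by
          rw [hgginv x]
      _ = inducedCircleMap Ginv x := Function.leftInverse_invFun hinj _
  have hcd_coe : ∀ s : ℝ, circleDeriv G ((s : ℝ) : Circle1) = deriv G s := fun s =>
    rep_eval (f := deriv G) hG'per s
  -- reduce both sides to interval integrals
  set a := Ginv 0 with ha
  have hGa : G a = 0 := hGinv 0
  have hGa1 : G (a + 1) = 1 := by rw [hGlift, hGa, zero_add]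
  set K : ℝ → ℝ := fun t =>
    (deriv H t) ^ 2 / c * (deriv G (Ginv t) * φ ((Ginv t : ℝ) : Circle1)) with hK
  have hKc : Continuous K := by
    apply Continuous.mul ((hH'c.pow 2).div_const c)
    apply Continuous.mul (hG'c.comp hGinvc)
    exact φ.continuous.comp ((AddCircle.continuous_mk' (p := (1:ℝ))).comp hGinvc)
  have hkey : ∀ s : ℝ, deriv G s • K (G s) = (deriv H s) ^ 2 / c * φ ((s : ℝ) : Circle1) := by
    intro s
    have h1 : deriv H (G s) ≠ 0 := ne_of_gt (hHpos _)
    have h2 : deriv H s ≠ 0 := ne_of_gt (hHpos _)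
    have hc0 : c ≠ 0 := ne_of_gt hcpos
    rw [hK]
    simp only [smul_eq_mul, hinvG]
    rw [hG' s]
    field_simp
  have hper : Function.Periodic (fun s : ℝ => (deriv H s) ^ 2 / c * φ ((s : ℝ) : Circle1)) 1 := by
    intro s
    simp only [hH'per s]
    congr 2
    exact AddCircle.coe_add_period 1 s
  calc ∫ x, φ x ∂μ
      = ∫ x, ρ x * φ x ∂(volume : Measure Circle1) := hμ' _
    _ = ∫ t in (0:ℝ)..1, ρ ((t:ℝ):Circle1) * φ ((t:ℝ):Circle1) := hcirc _
    _ = ∫ t in (0:ℝ)..1, (deriv H t) ^ 2 / c * φ ((t:ℝ):Circle1) := by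
        apply intervalIntegral.integral_congr
        intro t _
        dsimp only
        rw [hρ_coe]
    _ = ∫ s in (0:ℝ)..(0+1), (deriv H s) ^ 2 / c * φ ((s:ℝ):Circle1) := by
        norm_num
    _ = ∫ s in a..(a+1), (deriv H s) ^ 2 / c * φ ((s:ℝ):Circle1) :=
        (hper.intervalIntegral_add_eq a 0).symm
    _ = ∫ s in a..(a+1), deriv G s • (K ∘ G) s := by
        apply intervalIntegral.integral_congr
        intro s _
        dsimp only [Function.comp]
        exact (hkey s).symm
    _ = ∫ t in G a..G (a+1), K t := intervalIntegral.integral_comp_smul_deriv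
          (fun x _ => by rw [hG']; exact hGd x) hG'c.continuousOn hKc
    _ = ∫ t in (0:ℝ)..1, K t := by rw [hGa, hGa1]
    _ = ∫ t in (0:ℝ)..1, ρ ((t:ℝ):Circle1) *
          (circleDeriv G (Function.invFun (inducedCircleMap G) ((t:ℝ):Circle1)) *
           φ (Function.invFun (inducedCircleMap G) ((t:ℝ):Circle1))) := by
        apply intervalIntegral.integral_congr
        intro t _
        dsimp only
        rw [hinv_eq, hginv_coe, hcd_coe, hρ_coe]
    _ = ∫ x, ρ x * (circleDeriv G (Function.invFun (inducedCircleMap G) x) *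
          φ (Function.invFun (inducedCircleMap G) x)) ∂(volume : Measure Circle1) :=
        (hcirc (fun x => ρ x * (circleDeriv G (Function.invFun (inducedCircleMap G) x) *
          φ (Function.invFun (inducedCircleMap G) x)))).symm
    _ = ∫ x, circleDeriv G (Function.invFun (inducedCircleMap G) x) *
          φ (Function.invFun (inducedCircleMap G) x) ∂μ := (hμ' _).symm

end
end

section
/- Let f be a C¹ orientation-preserving homeomorphism of the circle ℝ/ℤ and let μ be a (-1)-measure of f. Then for every point p ∈ ℝ/ℤ one has μ({p}) = f'(p) · μ({f(p)}). -/
open MeasureTheory Filter Metric Set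

noncomputable section

lemma circleRep_coe (t : ℝ) : circleRep ((t : ℝ) : Circle1) = Int.fract t := by
  have := AddCircle.coe_equivIco_mk_apply (p := (1:ℝ)) t
  simpa [circleRep] using this

lemma circleRep_mem (x : Circle1) : circleRep x ∈ Ico (0:ℝ) 1 := by
  have := (AddCircle.equivIco 1 0 x).2
  simpa [circleRep] using this

lemma F_int {F : ℝ → ℝ} (hlift : ∀ x : ℝ, F (x + 1) = F x + 1) (x : ℝ) (n : ℤ) :
    F (x + n) = F x + n := by
  induction n using Int.induction_on with
  | zero => simp
  | succ k ih =>
      have h := hlift (x + (k : ℝ))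
      push_cast at ih ⊢
      rw [← add_assoc, h, ih]; ring
  | pred k ih =>
      have h := hlift (x + (-(k:ℝ) - 1))
      have e : x + (-(k:ℝ) - 1) + 1 = x + -(k:ℝ) := by ring
      rw [e] at h
      push_cast at ih ⊢
      have e2 : x + (-(k:ℝ) - 1) = x + -((k:ℝ) + 1) := by ring
      rw [e2] at h
      rw [e2]
      linarith

lemma f_mk {F : ℝ → ℝ} (hlift : ∀ x : ℝ, F (x + 1) = F x + 1) (t : ℝ) :
    inducedCircleMap F ((t : ℝ) : Circle1) = ((F t : ℝ) : Circle1) := by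
  unfold inducedCircleMap
  rw [circleRep_coe]
  have e : Int.fract t = t + ((-⌊t⌋ : ℤ) : ℝ) := by
    rw [Int.fract]; push_cast; ring
  rw [e, F_int hlift]
  rw [QuotientAddGroup.eq_iff_sub_mem]
  refine AddSubgroup.mem_zmultiples_iff.2 ⟨-⌊t⌋, ?_⟩
  push_cast
  simp

example : True := trivial

lemma f_cont {F : ℝ → ℝ} (hlift : ∀ x : ℝ, F (x + 1) = F x + 1) (hc : Continuous F) :
    Continuous (inducedCircleMap F) := by
  have hq := QuotientAddGroup.isQuotientMap_mk (AddSubgroup.zmultiples (1:ℝ))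
  rw [hq.continuous_iff]
  have : (inducedCircleMap F) ∘ (QuotientAddGroup.mk : ℝ → Circle1)
      = fun t : ℝ => ((F t : ℝ) : Circle1) := by
    funext t
    exact f_mk hlift t
  rw [this]
  exact (AddCircle.continuous_mk' 1).comp hc

lemma f_inj {F : ℝ → ℝ} (hlift : ∀ x : ℝ, F (x + 1) = F x + 1) (hmono : StrictMono F) :
    Function.Injective (inducedCircleMap F) := by
  intro a b hab
  set x := circleRep a with hx
  set y := circleRep b with hy
  have hxm := circleRep_mem a
  have hym := circleRep_mem b
  have h : ((F x : ℝ) : Circle1) = ((F y : ℝ) : Circle1) := hab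
  rw [QuotientAddGroup.eq_iff_sub_mem, AddSubgroup.mem_zmultiples_iff] at h
  obtain ⟨k, hk⟩ := h
  have hk' : (k : ℝ) = F x - F y := by simpa using hk
  have h1 : F x < F y + 1 := by
    have := hmono (show x < y + 1 by linarith [hxm.2, hym.1])
    rw [hlift] at this
    exact this
  have h2 : F y < F x + 1 := by
    have := hmono (show y < x + 1 by linarith [hym.2, hxm.1])
    rw [hlift] at this
    exact this
  have hk0 : k = 0 := by
    have : |(k : ℝ)| < 1 := by rw [abs_lt]; constructor <;> linarith
    exact_mod_cast by
      have := (Int.abs_lt_one_iff).1 (by exact_mod_cast this)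
      exact this
  have hxy : F x = F y := by rw [hk0] at hk'; push_cast at hk'; linarith
  have : x = y := hmono.injective hxy
  rw [← coe_circleRep a, ← coe_circleRep b, ← hx, ← hy, this]

lemma f_surj {F : ℝ → ℝ} (hlift : ∀ x : ℝ, F (x + 1) = F x + 1) (hmono : StrictMono F)
    (hc : Continuous F) : Function.Surjective (inducedCircleMap F) := by
  have htop : Tendsto F atTop atTop := by
    refine tendsto_atTop_atTop_of_monotone hmono.monotone (fun b => ?_)
    obtain ⟨n, hn⟩ := exists_nat_ge (b - F 0)
    refine ⟨(n : ℝ), ?_⟩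
    have := F_int hlift 0 (n : ℤ)
    push_cast at this
    rw [zero_add] at this
    rw [this]; linarith
  have hbot : Tendsto F atBot atBot := by
    refine tendsto_atBot_atBot_of_monotone hmono.monotone (fun b => ?_)
    obtain ⟨n, hn⟩ := exists_nat_ge (F 0 - b)
    refine ⟨-(n : ℝ), ?_⟩
    have := F_int hlift 0 (-(n : ℤ))
    push_cast at this
    rw [zero_add] at this
    rw [this]; linarith
  have hFsurj : Function.Surjective F := Continuous.surjective hc htop hbot
  intro y
  obtain ⟨t, ht⟩ := hFsurj (circleRep y)
  exact ⟨((t : ℝ) : Circle1), by rw [f_mk hlift, ht, coe_circleRep]⟩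

lemma measurable_circleRep : Measurable circleRep := by
  haveI : Fact ((0:ℝ) < 1) := ⟨one_pos⟩
  exact measurable_subtype_coe.comp (AddCircle.measurableEquivIco (T := 1) 0).measurable

lemma mono_deriv_nonneg {f : ℝ → ℝ} (h : Monotone f) (x : ℝ)
    (hd : DifferentiableAt ℝ f x) : 0 ≤ deriv f x := by
  have h1 : Tendsto (slope f x) (nhdsWithin x (Ioi x)) (nhds (deriv f x)) :=
    ((hasDerivAt_iff_tendsto_slope).1 hd.hasDerivAt).mono_left
      (nhdsWithin_mono x (fun y hy => ne_of_gt hy))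
  refine ge_of_tendsto h1 ?_
  filter_upwards [self_mem_nhdsWithin] with y hy
  have : x < y := hy
  rw [slope_def_field]
  exact div_nonneg (by linarith [h this.le]) (by linarith)

noncomputable def bump (p : Circle1) (n : ℕ) : C(Circle1, ℝ) :=
  ⟨fun x => max 0 (1 - n * dist x p),
    (continuous_const.max (continuous_const.sub
      (continuous_const.mul ((continuous_id.dist continuous_const)))))⟩

lemma bump_nonneg (p : Circle1) (n : ℕ) (x : Circle1) : 0 ≤ bump p n x := le_max_left _ _

lemma bump_le_one (p : Circle1) (n : ℕ) (x : Circle1) : bump p n x ≤ 1 := by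
  refine max_le zero_le_one ?_
  have : (0:ℝ) ≤ n * dist x p := mul_nonneg (Nat.cast_nonneg n) dist_nonneg
  linarith

lemma bump_self (p : Circle1) (n : ℕ) : bump p n p = 1 := by
  simp [bump]

lemma bump_tendsto (p : Circle1) (x : Circle1) (hx : x ≠ p) :
    Tendsto (fun n => bump p n x) atTop (nhds 0) := by
  have hd : 0 < dist x p := dist_pos.2 hx
  obtain ⟨N, hN⟩ := exists_nat_ge (1 / dist x p)
  have hev : ∀ᶠ n in atTop, bump p n x = 0 := by
    filter_upwards [eventually_ge_atTop N] with n hn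
    have h1 : (1:ℝ) ≤ n * dist x p := by
      have : (1:ℝ)/dist x p ≤ (n:ℝ) := le_trans hN (by exact_mod_cast hn)
      calc (1:ℝ) = (1/dist x p) * dist x p := by field_simp
        _ ≤ n * dist x p := by gcongr
    show max 0 (1 - n * dist x p) = 0
    rw [max_eq_left]; linarith
  exact Tendsto.congr' (hev.mono fun n h => h.symm) tendsto_const_nhds

theorem neg_one_measure_atom_relation' (F : ℝ → ℝ)
    (hlift : ∀ x : ℝ, F (x + 1) = F x + 1)
    (hmono : StrictMono F)
    (hC1 : ContDiff ℝ 1 F)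
    (μ : Measure Circle1)
    (hprob : IsProbabilityMeasure μ)
    (hint : ∀ φ : C(Circle1, ℝ),
      ∫ x, φ x ∂μ =
        ∫ x, circleDeriv F (Function.invFun (inducedCircleMap F) x) *
              φ (Function.invFun (inducedCircleMap F) x) ∂μ)
    (p : Circle1) :
    μ {p} = ENNReal.ofReal (circleDeriv F p) * μ {inducedCircleMap F p} := by
  haveI := hprob
  set f := inducedCircleMap F with hf
  set g := Function.invFun f with hg
  have hc : Continuous F := hC1.continuous
  have hbij : Function.Bijective f := ⟨f_inj hlift hmono, f_surj hlift hmono hc⟩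
  have hfc : Continuous f := f_cont hlift hc
  -- g is the two-sided inverse
  have hgf : ∀ x, g (f x) = x := fun x => Function.leftInverse_invFun hbij.1 x
  have hfg : ∀ x, f (g x) = x := fun x => Function.rightInverse_invFun hbij.2 x
  -- g is continuous
  have hgc : Continuous g := by
    let e : Circle1 ≃ Circle1 := Equiv.ofBijective f hbij
    have hfc' : Continuous e := hfc
    let h : Circle1 ≃ₜ Circle1 := hfc'.homeoOfEquivCompactToT2
    have : g = h.symm := by
      funext x
      apply hbij.1
      rw [hfg x]
      exact (h.apply_symm_apply x).symm
    rw [this]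
    exact h.symm.continuous
  -- derivative bound
  have hderivc : Continuous (deriv F) := hC1.continuous_deriv le_rfl
  obtain ⟨C, hC⟩ := isCompact_Icc.exists_bound_of_continuousOn
    (s := Icc (0:ℝ) 1) hderivc.continuousOn
  have hCd : ∀ y : Circle1, |circleDeriv F y| ≤ C := fun y => by
    have := circleRep_mem y
    exact hC _ ⟨this.1, this.2.le⟩
  have hC0 : 0 ≤ C := le_trans (abs_nonneg _) (hCd p)
  -- measurability of circleDeriv F ∘ g
  have hmeas1 : Measurable fun x => circleDeriv F (g x) :=
    (hderivc.measurable.comp measurable_circleRep).comp hgc.measurable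
  -- the two limits
  have hms : MeasurableSet ({p} : Set Circle1) := measurableSet_singleton p
  have hmsf : MeasurableSet ({f p} : Set Circle1) := measurableSet_singleton (f p)
  have h1 : Tendsto (fun n => ∫ x, bump p n x ∂μ) atTop
      (nhds (∫ x, Set.indicator {p} (fun _ => (1:ℝ)) x ∂μ)) := by
    refine tendsto_integral_of_dominated_convergence (fun _ => (1:ℝ))
      (fun n => (bump p n).continuous.aestronglyMeasurable) (integrable_const 1) ?_ ?_
    · intro n
      filter_upwards with x
      rw [Real.norm_eq_abs, abs_of_nonneg (bump_nonneg p n x)]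
      exact bump_le_one p n x
    · filter_upwards with x
      by_cases hx : x = p
      · subst hx
        simp only [bump_self]
        simpa using tendsto_const_nhds
      · have := bump_tendsto p x hx
        simpa [Set.indicator_of_notMem (by simpa using hx : x ∉ ({p} : Set Circle1)), Pi.single_apply, hx] using this
  have h2 : Tendsto (fun n => ∫ x, circleDeriv F (g x) * bump p n (g x) ∂μ) atTop
      (nhds (∫ x, Set.indicator {f p} (fun _ => circleDeriv F p) x ∂μ)) := by
    refine tendsto_integral_of_dominated_convergence (fun _ => C)
      (fun n => (hmeas1.mul (((bump p n).continuous.comp hgc).measurable)).aestronglyMeasurable)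
      (integrable_const C) ?_ ?_
    · intro n
      filter_upwards with x
      rw [Real.norm_eq_abs, abs_mul]
      calc |circleDeriv F (g x)| * |bump p n (g x)| ≤ C * 1 := by
            refine mul_le_mul (hCd _) ?_ (abs_nonneg _) hC0
            rw [abs_of_nonneg (bump_nonneg _ _ _)]
            exact bump_le_one _ _ _
        _ = C := mul_one C
    · filter_upwards with x
      by_cases hx : x = f p
      · subst hx
        rw [hgf p]
        simp only [bump_self]
        have : Set.indicator ({f p} : Set Circle1) (fun _ => circleDeriv F p) (f p)
            = circleDeriv F p := by simp
        rw [this]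
        simpa using tendsto_const_nhds
      · have hgx : g x ≠ p := by
          intro h
          apply hx
          rw [← hfg x, h]
        have := (bump_tendsto p (g x) hgx).const_mul (circleDeriv F (g x))
        rw [mul_zero] at this
        simpa [Set.indicator_of_notMem (by simpa using hx : x ∉ ({f p} : Set Circle1)), Pi.single_apply, hx] using this
  have heq : ∀ n, ∫ x, bump p n x ∂μ = ∫ x, circleDeriv F (g x) * bump p n (g x) ∂μ :=
    fun n => hint (bump p n)
  have hkey : ∫ x, Set.indicator {p} (fun _ => (1:ℝ)) x ∂μ
      = ∫ x, Set.indicator {f p} (fun _ => circleDeriv F p) x ∂μ :=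
    tendsto_nhds_unique (by simpa only [heq] using h1 : Tendsto
      (fun n => ∫ x, circleDeriv F (g x) * bump p n (g x) ∂μ) atTop _) h2
  rw [integral_indicator_const (1:ℝ) hms, integral_indicator_const _ hmsf] at hkey
  simp only [smul_eq_mul, mul_one] at hkey
  have hd0 : 0 ≤ circleDeriv F p :=
    mono_deriv_nonneg hmono.monotone _ ((hC1.differentiable one_ne_zero) _)
  have hfin1 : μ {p} ≠ ⊤ := measure_ne_top μ _
  have hfin2 : μ {f p} ≠ ⊤ := measure_ne_top μ _
  calc μ {p} = ENNReal.ofReal ((μ {p}).toReal) := (ENNReal.ofReal_toReal hfin1).symm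
    _ = ENNReal.ofReal ((μ {f p}).toReal * circleDeriv F p) := by exact congrArg ENNReal.ofReal hkey
    _ = ENNReal.ofReal (circleDeriv F p) * ENNReal.ofReal ((μ {f p}).toReal) := by
        rw [mul_comm, ENNReal.ofReal_mul hd0]
    _ = ENNReal.ofReal (circleDeriv F p) * μ {f p} := by rw [ENNReal.ofReal_toReal hfin2]


/-- For a C¹ orientation-preserving circle homeomorphism `f` (given by a
lift `F`) and a (-1)-measure `μ` of `f`, one has `μ {p} = f'(p) · μ {f(p)}` for every point
`p` of the circle. -/
theorem neg_one_measure_atom_relation (F : ℝ → ℝ)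
    (hlift : ∀ x : ℝ, F (x + 1) = F x + 1)
    (hmono : StrictMono F)
    (hC1 : ContDiff ℝ 1 F)
    (μ : Measure Circle1) (hμ : IsNegOneMeasure F μ)
    (p : Circle1) :
    μ {p} = ENNReal.ofReal (circleDeriv F p) * μ {inducedCircleMap F p} := by
  obtain ⟨hprob, hint⟩ := hμ
  exact neg_one_measure_atom_relation' F hlift hmono hC1 μ hprob hint p

end
end

section
/- Let ε > 0 and let F be a holomorphic function on the strip S_ε = { z ∈ ℂ : |Im z| < ε } such that F(z+1) = F(z) + 1, F maps ℝ into ℝ, F'(0) = F''(0) = 0, F'''(0) > 0, and the only solutions of F(z) = F(0) in S_ε are the points z ∈ ℤ. Then there exists a holomorphic function G on S_ε with G(z)³ = F(z) − F(0) for all z ∈ S_ε, G mapping ℝ into ℝ, G(0) = 0, and G'(0) > 0. -/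
open Filter Set

noncomputable section

section AuxSection
open Complex Set Filter intervalIntegral Metric
namespace CubeRootAux

lemma isOpen_strip (ε : ℝ) : IsOpen {z : ℂ | |z.im| < ε} := by
  have : {z : ℂ | |z.im| < ε} = Complex.im ⁻¹' (Ioo (-ε) ε) := by
    ext z; simp [abs_lt, mem_Ioo]
  rw [this]
  exact isOpen_Ioo.preimage continuous_im

lemma convex_strip (ε : ℝ) : Convex ℝ {z : ℂ | |z.im| < ε} := by
  have : {z : ℂ | |z.im| < ε} = {z : ℂ | -ε < z.im} ∩ {z : ℂ | z.im < ε} := by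
    ext z; simp [abs_lt, and_comm]
  rw [this]
  exact (convex_halfSpace_im_gt (-ε)).inter (convex_halfSpace_im_lt ε)

lemma exists_primitive {ε : ℝ} (hε : 0 < ε) (φ : ℂ → ℂ)
    (hφ : DifferentiableOn ℂ φ {z : ℂ | |z.im| < ε}) :
    ∃ Φ : ℂ → ℂ, Φ 0 = 0 ∧ ∀ z ∈ {z : ℂ | |z.im| < ε}, HasDerivAt Φ (φ z) z := by
  set S : Set ℂ := {z : ℂ | |z.im| < ε} with hS
  have hSo : IsOpen S := isOpen_strip ε
  have hφc : ∀ z ∈ S, ContinuousAt φ z := fun z hz =>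
    (hφ.differentiableAt (hSo.mem_nhds hz)).continuousAt
  have hmem : ∀ (x y : ℝ), |y| < ε → (↑x + ↑y * I) ∈ S := by
    intro x y hy; simpa [hS] using hy
  have hseg_h : ∀ (y a b : ℝ), |y| < ε →
      IntervalIntegrable (fun t : ℝ => φ (↑t + ↑y * I)) MeasureTheory.volume a b := by
    intro y a b hy
    apply ContinuousOn.intervalIntegrable
    have : ContinuousOn (φ ∘ fun t : ℝ => (↑t + ↑y * I : ℂ)) (uIcc a b) := by
      apply ContinuousOn.comp (t := S)
      · exact fun p hp => (hφc p hp).continuousWithinAt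
      · fun_prop
      · intro t _; exact hmem t y hy
    exact this
  have hseg_h0 : ∀ (a b : ℝ),
      IntervalIntegrable (fun t : ℝ => φ ↑t) MeasureTheory.volume a b := by
    intro a b
    have := hseg_h 0 a b (by simpa using hε)
    simpa using this
  have hseg_v : ∀ (x a b : ℝ), |a| < ε → |b| < ε →
      IntervalIntegrable (fun s : ℝ => φ (↑x + ↑s * I)) MeasureTheory.volume a b := by
    intro x a b ha hb
    apply ContinuousOn.intervalIntegrable
    intro s hs
    have hc1 : ContinuousOn (φ ∘ fun u : ℝ => (↑x + ↑u * I : ℂ)) (uIcc a b) := by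
      apply ContinuousOn.comp (t := S)
      · exact fun p hp => (hφc p hp).continuousWithinAt
      · fun_prop
      · intro u hu
        have huε : |u| < ε := by
          rcases abs_lt.mp ha with ⟨ha1, ha2⟩
          rcases abs_lt.mp hb with ⟨hb1, hb2⟩
          rcases mem_uIcc.mp hu with ⟨h1, h2⟩ | ⟨h1, h2⟩ <;> (rw [abs_lt]; constructor <;> linarith)
        exact hmem x u huε
    exact (hc1 s hs).mono (by simp)
  set Φ : ℂ → ℂ := fun z =>
    (∫ t in (0:ℝ)..z.re, φ ↑t) + I • ∫ s in (0:ℝ)..z.im, φ (↑z.re + ↑s * I)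
    with hΦ
  -- rectangle identity
  have key : ∀ z ∈ S, ∀ w ∈ S,
      Φ w - Φ z = (∫ t in z.re..w.re, φ (↑t + ↑z.im * I))
        + I • ∫ s in z.im..w.im, φ (↑w.re + ↑s * I) := by
    intro z hz w hw
    have hzε : |z.im| < ε := hz
    have hwε : |w.im| < ε := hw
    have rect := Complex.integral_boundary_rect_eq_zero_of_differentiableOn φ
      (↑z.re) (↑w.re + ↑z.im * I) (by
        apply hφ.mono
        intro p hp
        rw [mem_reProdIm] at hp
        have h2 : p.im ∈ uIcc 0 z.im := by simpa using hp.2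
        rcases abs_lt.mp hzε with ⟨hb1, hb2⟩
        have : |p.im| < ε := by
          rcases mem_uIcc.mp h2 with ⟨h1', h2'⟩ | ⟨h1', h2'⟩ <;>
            (rw [abs_lt]; constructor <;> linarith)
        exact this)
    simp only [ofReal_re, ofReal_im, add_re, add_im, mul_re, mul_im, I_re, I_im,
      ofReal_zero, zero_mul, mul_zero, mul_one, zero_add, add_zero, sub_zero, zero_sub,
      sub_self, smul_eq_mul] at rect
    have a1 : (∫ t in (0:ℝ)..z.re, φ ↑t) + (∫ t in z.re..w.re, φ ↑t)
        = ∫ t in (0:ℝ)..w.re, φ ↑t :=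
      integral_add_adjacent_intervals (hseg_h0 0 z.re) (hseg_h0 z.re w.re)
    have hε0 : |(0:ℝ)| < ε := by simpa using hε
    have a2 : (∫ s in (0:ℝ)..z.im, φ (↑w.re + ↑s * I)) + (∫ s in z.im..w.im, φ (↑w.re + ↑s * I))
        = ∫ s in (0:ℝ)..w.im, φ (↑w.re + ↑s * I) :=
      integral_add_adjacent_intervals (hseg_v w.re 0 z.im hε0 hzε) (hseg_v w.re z.im w.im hzε hwε)
    simp only [hΦ, smul_eq_mul]
    linear_combination rect - a1 - (I : ℂ) * a2
  refine ⟨Φ, by simp [hΦ], ?_⟩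
  intro z hz
  rw [hasDerivAt_iff_isLittleO, Asymptotics.isLittleO_iff]
  intro c hc
  obtain ⟨δ₁, hδ₁pos, hδ₁⟩ := Metric.isOpen_iff.mp hSo z hz
  obtain ⟨δ₂, hδ₂pos, hδ₂⟩ := Metric.continuousAt_iff.mp (hφc z hz) (c/2) (by linarith)
  set δ := min δ₁ δ₂ with hδdef
  have hδpos : 0 < δ := lt_min hδ₁pos hδ₂pos
  have hball : ∀ ζ : ℂ, dist ζ z < δ → ζ ∈ S ∧ ‖φ ζ - φ z‖ ≤ c/2 := by
    intro ζ hζ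
    constructor
    · exact hδ₁ (mem_ball.mpr (lt_of_lt_of_le hζ (min_le_left _ _)))
    · have := hδ₂ (lt_of_lt_of_le hζ (min_le_right _ _))
      rw [dist_eq_norm] at this
      linarith
  filter_upwards [Metric.ball_mem_nhds z (half_pos hδpos)] with w hw
  have hwz : ‖w - z‖ < δ/2 := by rw [← dist_eq_norm]; exact mem_ball.mp hw
  have hwS : w ∈ S := (hball w (by rw [dist_eq_norm]; linarith)).1
  have hzε : |z.im| < ε := hz
  -- distances of segment points
  have hre : |w.re - z.re| ≤ ‖w - z‖ := by
    have := Complex.abs_re_le_norm (w - z)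
    simpa [Complex.sub_re] using this
  have him : |w.im - z.im| ≤ ‖w - z‖ := by
    have := Complex.abs_im_le_norm (w - z)
    simpa [Complex.sub_im] using this
  -- horizontal segment bound
  have hbound1 : ∀ t ∈ Set.uIoc z.re w.re, ‖φ (↑t + ↑z.im * I) - φ z‖ ≤ c/2 := by
    intro t ht
    have hd : dist (↑t + ↑z.im * I) z < δ := by
      have heq : (↑t + ↑z.im * I) - z = ((t - z.re : ℝ) : ℂ) := by
        apply Complex.ext <;> simp
      rw [dist_eq_norm, heq, Complex.norm_real]
      have : |t - z.re| ≤ |w.re - z.re| := by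
        rcases mem_uIoc.mp ht with ⟨h1, h2⟩ | ⟨h1, h2⟩ <;>
          (rw [abs_le]; constructor <;>
            linarith [neg_abs_le (w.re - z.re), le_abs_self (w.re - z.re),
              abs_nonneg (w.re - z.re)])
      calc |t - z.re| ≤ |w.re - z.re| := this
        _ ≤ ‖w - z‖ := hre
        _ < δ := by linarith
    exact (hball _ hd).2
  have hbound2 : ∀ s ∈ Set.uIoc z.im w.im, ‖φ (↑w.re + ↑s * I) - φ z‖ ≤ c/2 := by
    intro s hs
    have hd : dist (↑w.re + ↑s * I) z < δ := by
      have heq : (↑w.re + ↑s * I) - z = ((w.re - z.re : ℝ) : ℂ) + ((s - z.im : ℝ) : ℂ) * I := by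
        apply Complex.ext <;> simp
      rw [dist_eq_norm, heq]
      have h1 : ‖((w.re - z.re : ℝ) : ℂ) + ((s - z.im : ℝ) : ℂ) * I‖
          ≤ |w.re - z.re| + |s - z.im| := by
        calc ‖((w.re - z.re : ℝ) : ℂ) + ((s - z.im : ℝ) : ℂ) * I‖
            ≤ ‖((w.re - z.re : ℝ) : ℂ)‖ + ‖((s - z.im : ℝ) : ℂ) * I‖ := norm_add_le _ _
          _ = |w.re - z.re| + |s - z.im| := by
              rw [norm_mul]
              simp only [Complex.norm_real, Complex.norm_I, mul_one,
                Real.norm_eq_abs]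
      have h2 : |s - z.im| ≤ |w.im - z.im| := by
        rcases mem_uIoc.mp hs with ⟨h1', h2'⟩ | ⟨h1', h2'⟩ <;>
          (rw [abs_le]; constructor <;>
            linarith [neg_abs_le (w.im - z.im), le_abs_self (w.im - z.im),
              abs_nonneg (w.im - z.im)])
      calc ‖((w.re - z.re : ℝ) : ℂ) + ((s - z.im : ℝ) : ℂ) * I‖
          ≤ |w.re - z.re| + |s - z.im| := h1
        _ ≤ ‖w - z‖ + ‖w - z‖ := add_le_add hre (le_trans h2 him)
        _ < δ := by linarith
    exact (hball _ hd).2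
  -- decomposition
  have hint1 : IntervalIntegrable (fun t : ℝ => φ (↑t + ↑z.im * I)) MeasureTheory.volume z.re w.re :=
    hseg_h z.im z.re w.re hzε
  have hint2 : IntervalIntegrable (fun s : ℝ => φ (↑w.re + ↑s * I)) MeasureTheory.volume z.im w.im :=
    hseg_v w.re z.im w.im hzε hwS
  set A := ∫ t in z.re..w.re, (φ (↑t + ↑z.im * I) - φ z) with hA
  set B := ∫ s in z.im..w.im, (φ (↑w.re + ↑s * I) - φ z) with hB
  have eA : A = (∫ t in z.re..w.re, φ (↑t + ↑z.im * I)) - ((w.re - z.re : ℝ) : ℂ) * φ z := by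
    rw [hA, integral_sub hint1 intervalIntegrable_const, integral_const]
    simp [smul_eq_mul]
  have eB : B = (∫ s in z.im..w.im, φ (↑w.re + ↑s * I)) - ((w.im - z.im : ℝ) : ℂ) * φ z := by
    rw [hB, integral_sub hint2 intervalIntegrable_const, integral_const]
    simp [smul_eq_mul]
  have hwzeq : w - z = ((w.re - z.re : ℝ) : ℂ) + ((w.im - z.im : ℝ) : ℂ) * I := by
    apply Complex.ext <;> simp
  have decomp : Φ w - Φ z - (w - z) • φ z = A + I * B := by
    have hk := key z hz w hwS
    rw [smul_eq_mul]
    rw [eA, eB]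
    rw [smul_eq_mul] at hk
    linear_combination hk - hwzeq * φ z
  rw [decomp]
  have nA : ‖A‖ ≤ c/2 * |w.re - z.re| := norm_integral_le_of_norm_le_const hbound1
  have nB : ‖B‖ ≤ c/2 * |w.im - z.im| := norm_integral_le_of_norm_le_const hbound2
  calc ‖A + I * B‖ ≤ ‖A‖ + ‖I * B‖ := norm_add_le _ _
    _ = ‖A‖ + ‖B‖ := by simp [norm_mul]
    _ ≤ c/2 * |w.re - z.re| + c/2 * |w.im - z.im| := add_le_add nA nB
    _ ≤ c/2 * ‖w - z‖ + c/2 * ‖w - z‖ := by gcongr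
    _ = c * ‖w - z‖ := by ring


lemma analyticAt_deriv' {u : ℂ → ℂ} {z : ℂ} (hu : AnalyticAt ℂ u z) :
    AnalyticAt ℂ (deriv u) z := by
  obtain ⟨s, hs, h⟩ := hu.exists_mem_nhds_analyticOnNhd
  exact h.deriv z (mem_of_mem_nhds hs)

lemma deriv_pow_mul (k : ℕ) (u : ℂ → ℂ) (hu : AnalyticAt ℂ u 0) :
    ∃ v : ℂ → ℂ, AnalyticAt ℂ v 0 ∧ v 0 = (k + 1) * u 0 ∧
      deriv (fun w : ℂ => w ^ (k + 1) * u w) =ᶠ[nhds 0] fun z => z ^ k * v z := by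
  refine ⟨fun z => (k + 1) * u z + z * deriv u z, ?_, by simp, ?_⟩
  · exact (analyticAt_const.mul hu).add (analyticAt_id.mul (analyticAt_deriv' hu))
  · filter_upwards [hu.eventually_analyticAt] with z hz
    have h1 : HasDerivAt (fun w : ℂ => w ^ (k + 1)) ((k + 1 : ℕ) * z ^ k) z := by
      simpa using hasDerivAt_pow (k + 1) z
    have h2 : HasDerivAt u (deriv u z) z := hz.differentiableAt.hasDerivAt
    rw [HasDerivAt.deriv (f := fun w => w ^ (k + 1) * u w) (h1.mul h2)]
    push_cast
    ring

/-- local cube factorization at the triple zero -/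
lemma cube_factor {ε : ℝ} (hε : 0 < ε) (F : ℂ → ℂ)
    (hhol : DifferentiableOn ℂ F {z : ℂ | |z.im| < ε})
    (hd1 : deriv F 0 = 0)
    (hd2 : iteratedDeriv 2 F 0 = 0)
    (hd3 : iteratedDeriv 3 F 0 ≠ 0)
    (hpre : ∀ z : ℂ, |z.im| < ε → F z = F 0 → ∃ n : ℤ, z = (n : ℂ)) :
    ∃ g : ℂ → ℂ, AnalyticAt ℂ g 0 ∧ g 0 = iteratedDeriv 3 F 0 / 6 ∧
      ∀ᶠ z in nhds 0, F z - F 0 = z ^ 3 * g z := by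
  have h0S : (0 : ℂ) ∈ {z : ℂ | |z.im| < ε} := by simp [hε]
  set f : ℂ → ℂ := fun z => F z - F 0 with hf_def
  have hf : AnalyticAt ℂ f 0 :=
    ((hhol.analyticOnNhd (isOpen_strip ε)) 0 h0S).sub analyticAt_const
  -- derivative transfers
  have hdf : deriv f = deriv F := by
    funext z; exact deriv_sub_const (F 0)
  have hf1 : deriv f 0 = 0 := by rw [hdf]; exact hd1
  have hf2 : iteratedDeriv 2 f 0 = 0 := by
    rw [show (2 : ℕ) = 1 + 1 from rfl, iteratedDeriv_succ', hdf, ← iteratedDeriv_succ']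
    exact hd2
  have hf3 : iteratedDeriv 3 f 0 = iteratedDeriv 3 F 0 := by
    rw [show (3 : ℕ) = 2 + 1 from rfl, iteratedDeriv_succ', hdf, ← iteratedDeriv_succ']
  -- f is not eventually zero
  have hnot : ¬ ∀ᶠ z in nhds 0, f z = 0 := by
    intro hev
    rw [Metric.eventually_nhds_iff] at hev
    obtain ⟨δ, hδ, hev⟩ := hev
    set x : ℝ := min δ 1 / 2 with hx
    have hx0 : 0 < x := by positivity
    have hx1 : x < 1 := by
      have : min δ 1 ≤ 1 := min_le_right _ _
      simp only [hx]; linarith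
    have hxδ : x < δ := by
      have h1 : min δ 1 ≤ δ := min_le_left _ _
      have : 0 < min δ 1 := lt_min hδ one_pos
      simp only [hx]; linarith
    have hdist : dist ((x : ℝ) : ℂ) 0 < δ := by
      simp only [dist_zero_right, Complex.norm_real, Real.norm_eq_abs]
      rwa [abs_of_pos hx0]
    have hz0 : f ((x : ℝ) : ℂ) = 0 := hev hdist
    have hFx : F ((x : ℝ) : ℂ) = F 0 := by
      have := hz0; simpa [hf_def, sub_eq_zero] using this
    obtain ⟨n, hn⟩ := hpre _ (by simp [hε]) hFx
    have hxn : (x : ℝ) = (n : ℝ) := by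
      have := congrArg Complex.re hn
      simpa using this
    have h0' : (0 : ℝ) < (n : ℝ) := by rw [← hxn]; exact hx0
    have h1' : ((n : ℝ)) < 1 := by rw [← hxn]; exact hx1
    have h0'' : (0 : ℤ) < n := by exact_mod_cast h0'
    have h1'' : n < 1 := by exact_mod_cast h1'
    omega
  obtain ⟨n, g, hg, hg0, hfac⟩ := hf.exists_eventuallyEq_pow_smul_nonzero_iff.mpr hnot
  have hfac' : f =ᶠ[nhds 0] fun z => z ^ n * g z := by
    filter_upwards [hfac] with z hz
    simpa [smul_eq_mul] using hz
  -- rule out n = 0, 1, 2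
  obtain _ | _ | _ | m := n
  · exfalso
    have := hfac'.self_of_nhds
    simp [hf_def] at this
    exact hg0 this.symm
  · exfalso
    obtain ⟨v, hv, hv0, hdv⟩ := deriv_pow_mul 0 g hg
    have e1 : deriv f =ᶠ[nhds 0] fun z => z ^ 0 * v z := (hfac'.deriv).trans hdv
    have : deriv f 0 = v 0 := by simpa using e1.self_of_nhds
    rw [hf1] at this
    simp only [hv0] at this
    simp at this
    exact hg0 this.symm
  · exfalso
    obtain ⟨v, hv, hv0, hdv⟩ := deriv_pow_mul 1 g hg
    have e1 : deriv f =ᶠ[nhds 0] fun z => z ^ 1 * v z := (hfac'.deriv).trans hdv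
    obtain ⟨w, hw, hw0, hdw⟩ := deriv_pow_mul 0 v hv
    have e2 : deriv (deriv f) =ᶠ[nhds 0] fun z => z ^ 0 * w z := (e1.deriv).trans hdw
    have : iteratedDeriv 2 f 0 = w 0 := by
      rw [show (2 : ℕ) = 1 + 1 from rfl, iteratedDeriv_succ', iteratedDeriv_one]
      simpa using e2.self_of_nhds
    rw [hf2] at this
    rw [hw0, hv0] at this
    simp at this
    exact hg0 this
  · -- n = m + 3
    set u : ℂ → ℂ := fun z => z ^ m * g z with hu_def
    have hu : AnalyticAt ℂ u 0 := (analyticAt_id.pow m).mul hg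
    have hfacu : ∀ᶠ z in nhds 0, f z = z ^ (2 + 1) * u z := by
      filter_upwards [hfac'] with z hz
      rw [hz, hu_def]; ring
    obtain ⟨v, hv, hv0, hdv⟩ := deriv_pow_mul 2 u hu
    have e1 : deriv f =ᶠ[nhds 0] fun z => z ^ (1 + 1) * v z := by
      refine ((Filter.EventuallyEq.deriv hfacu).trans hdv).trans ?_
      exact Filter.Eventually.of_forall fun z => rfl
    obtain ⟨w, hw, hw0, hdw⟩ := deriv_pow_mul 1 v hv
    have e2 : deriv (deriv f) =ᶠ[nhds 0] fun z => z ^ (0 + 1) * w z := by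
      refine ((Filter.EventuallyEq.deriv e1).trans hdw).trans ?_
      exact Filter.Eventually.of_forall fun z => rfl
    obtain ⟨x, hx, hx0, hdx⟩ := deriv_pow_mul 0 w hw
    have e3 : deriv (deriv (deriv f)) =ᶠ[nhds 0] fun z => z ^ 0 * x z :=
      (Filter.EventuallyEq.deriv e2).trans hdx
    have hiter : iteratedDeriv 3 f 0 = x 0 := by
      rw [show (3 : ℕ) = 2 + 1 from rfl, iteratedDeriv_succ',
        show (2 : ℕ) = 1 + 1 from rfl, iteratedDeriv_succ', iteratedDeriv_one]
      simpa using e3.self_of_nhds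
    have hval : iteratedDeriv 3 F 0 = 6 * u 0 := by
      rw [← hf3, hiter, hx0, hw0, hv0]; ring
    have hm : m = 0 := by
      by_contra hm
      have : u 0 = 0 := by
        simp [hu_def, zero_pow hm]
      rw [this] at hval
      simp at hval
      exact hd3 hval
    subst hm
    refine ⟨g, hg, ?_, ?_⟩
    · have : u 0 = g 0 := by simp [hu_def]
      rw [this] at hval
      rw [hval]
      ring
    · filter_upwards [hfac'] with z hz
      simpa using hz

end CubeRootAux
end AuxSection

/-- If `F` is holomorphic on the strip `S_ε = {|Im z| < ε}`, commutes with
the unit translation, preserves ℝ, has `F'(0) = F''(0) = 0` and `F'''(0) > 0` (real), and the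
only solutions of `F z = F 0` in the strip are the integers, then `F − F 0` has a holomorphic
cube root `G` on the strip, real on ℝ, with `G 0 = 0` and `G'(0) > 0` (real). -/
theorem exists_holomorphic_cube_root
    (ε : ℝ) (hε : 0 < ε) (F : ℂ → ℂ)
    (hhol : DifferentiableOn ℂ F {z : ℂ | |z.im| < ε})
    (hper : ∀ z : ℂ, |z.im| < ε → F (z + 1) = F z + 1)
    (hreal : ∀ x : ℝ, (F x).im = 0)
    (hd1 : deriv F 0 = 0)
    (hd2 : iteratedDeriv 2 F 0 = 0)
    (hd3re : 0 < (iteratedDeriv 3 F 0).re)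
    (hd3im : (iteratedDeriv 3 F 0).im = 0)
    (hpre : ∀ z : ℂ, |z.im| < ε → F z = F 0 → ∃ n : ℤ, z = (n : ℂ)) :
    ∃ G : ℂ → ℂ,
      DifferentiableOn ℂ G {z : ℂ | |z.im| < ε} ∧
      (∀ z : ℂ, |z.im| < ε → G z ^ 3 = F z - F 0) ∧
      (∀ x : ℝ, (G x).im = 0) ∧
      G 0 = 0 ∧
      0 < (deriv G 0).re ∧ (deriv G 0).im = 0 := by
  have hSo : IsOpen {z : ℂ | |z.im| < ε} := CubeRootAux.isOpen_strip ε
  set S : Set ℂ := {z : ℂ | |z.im| < ε} with hS_def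
  have h0S : (0 : ℂ) ∈ S := by simp [hS_def, hε]
  have hxS : ∀ x : ℝ, ((x : ℝ) : ℂ) ∈ S := fun x => by simp [hS_def, hε]
  set c : ℂ := iteratedDeriv 3 F 0 with hc_def
  have hc0 : c ≠ 0 := by
    intro h
    rw [h] at hd3re
    simp at hd3re
  have hcre : c = ((c.re : ℝ) : ℂ) := by
    apply Complex.ext
    · simp
    · simp [hd3im]
  obtain ⟨g, hg, hg0, hfac⟩ := CubeRootAux.cube_factor hε F hhol hd1 hd2 hc0 hpre
  set h : ℂ → ℂ := fun z => if z = 0 then c / 6 else (F z - F 0) / z ^ 3 with hh_def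
  have hh0 : h 0 = c / 6 := by simp [hh_def]
  have hheq : h =ᶠ[nhds 0] g := by
    filter_upwards [hfac] with z hz
    by_cases h0 : z = 0
    · subst h0
      simp [hh_def, hg0, hc_def]
    · simp only [hh_def, if_neg h0]
      rw [hz]
      field_simp
  have hhdiff : DifferentiableOn ℂ h S := by
    intro z hz
    by_cases h0 : z = 0
    · subst h0
      exact ((hg.congr hheq.symm).differentiableAt).differentiableWithinAt
    · have hne : h =ᶠ[nhds z] fun w => (F w - F 0) / w ^ 3 := by
        filter_upwards [compl_singleton_mem_nhds h0] with w hw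
        simp only [hh_def, if_neg (by simpa using hw : w ≠ 0)]
      have hFd : DifferentiableAt ℂ (fun w => (F w - F 0) / w ^ 3) z := by
        apply DifferentiableAt.div
        · exact (hhol.differentiableAt (hSo.mem_nhds hz)).sub_const _
        · exact (differentiable_pow 3).differentiableAt
        · exact pow_ne_zero 3 h0
      exact (hFd.congr_of_eventuallyEq hne).differentiableWithinAt
  have hh_an : AnalyticOnNhd ℂ h S := hhdiff.analyticOnNhd hSo
  -- integer translation
  have hFn : ∀ n : ℤ, F ((n : ℤ) : ℂ) = F 0 + (n : ℂ) := by
    intro n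
    induction n using Int.induction_on with
    | zero => simp
    | succ k ih =>
        have hk : ((k : ℤ) : ℂ).im = 0 := by simp
        have := hper ((k : ℤ) : ℂ) (by simp [hS_def, hk, hε])
        push_cast at this ih ⊢
        rw [this, ih]
        ring
    | pred k ih =>
        have hk : ((-(k : ℤ) - 1 : ℤ) : ℂ).im = 0 := by simp
        have := hper ((-(k : ℤ) - 1 : ℤ) : ℂ) (by simp [hS_def, hk, hε])
        push_cast at this ih ⊢
        have h2 : (-(k : ℂ) - 1) + 1 = -(k : ℂ) := by ring
        rw [h2] at this
        rw [ih] at this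
        have := this.symm
        push_cast
        linear_combination this
  have hmul : ∀ z ∈ S, z ^ 3 * h z = F z - F 0 := by
    intro z hz
    by_cases h0 : z = 0
    · subst h0; simp
    · simp only [hh_def, if_neg h0]
      field_simp
  have hh_ne : ∀ z ∈ S, h z ≠ 0 := by
    intro z hz h0
    by_cases hz0 : z = 0
    · subst hz0
      rw [hh0] at h0
      exact hc0 (by field_simp at h0; simpa using h0)
    · simp only [hh_def, if_neg hz0] at h0
      rw [div_eq_zero_iff] at h0
      rcases h0 with h0 | h0
      · have hFz : F z = F 0 := by linear_combination h0
        obtain ⟨n, hn⟩ := hpre z hz hFz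
        have : F ((n : ℤ) : ℂ) = F 0 := by rw [← hn]; exact hFz
        rw [hFn n] at this
        have : (n : ℂ) = 0 := by linear_combination this
        rw [this] at hn
        exact hz0 hn
      · exact pow_ne_zero 3 hz0 h0
  -- primitive of logarithmic derivative
  set φ : ℂ → ℂ := fun z => deriv h z / h z with hφ_def
  have hφdiff : DifferentiableOn ℂ φ S :=
    DifferentiableOn.div ((hh_an.deriv).differentiableOn) hhdiff hh_ne
  obtain ⟨Φ, hΦ0, hΦd⟩ := CubeRootAux.exists_primitive hε φ hφdiff
  set r : ℝ := c.re / 6 with hr_def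
  have hr : 0 < r := by positivity
  have hc6 : c / 6 = ((r : ℝ) : ℂ) := by
    rw [hcre, hr_def]
    push_cast
    ring
  -- h = (c/6) exp Φ on S
  have hψ : ∀ z ∈ S, h z = ((r : ℝ) : ℂ) * Complex.exp (Φ z) := by
    have hψd : DifferentiableOn ℂ (fun z => h z * Complex.exp (-Φ z)) S := by
      apply DifferentiableOn.mul hhdiff
      intro z hz
      exact (((hΦd z hz).differentiableAt).neg.cexp).differentiableWithinAt
    have hzero : ∀ z ∈ S, fderivWithin ℂ (fun z => h z * Complex.exp (-Φ z)) S z = 0 := by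
      intro z hz
      have hh' : HasDerivAt h (deriv h z) z :=
        (hhdiff.differentiableAt (hSo.mem_nhds hz)).hasDerivAt
      have hE : HasDerivAt (fun w => Complex.exp (-Φ w)) (Complex.exp (-Φ z) * -(φ z)) z :=
        ((hΦd z hz).neg).cexp
      have hprod := hh'.mul hE
      have hval : deriv h z * Complex.exp (-Φ z) + h z * (Complex.exp (-Φ z) * -(φ z)) = 0 := by
        rw [hφ_def]
        have := hh_ne z hz
        field_simp
        ring
      rw [hval] at hprod
      rw [fderivWithin_of_isOpen hSo hz, HasFDerivAt.fderiv (f := fun z => h z * Complex.exp (-Φ z)) hprod.hasFDerivAt]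
      ext w
      simp
    intro z hz
    have hconst := (CubeRootAux.convex_strip ε).is_const_of_fderivWithin_eq_zero hψd hzero hz h0S
    have hψ0 : h 0 * Complex.exp (-Φ 0) = ((r : ℝ) : ℂ) := by
      rw [hh0, hΦ0, hc6]
      simp
    rw [hψ0] at hconst
    have h1 : Complex.exp (-Φ z) * Complex.exp (Φ z) = 1 := by
      rw [← Complex.exp_add]
      simp
    calc h z = h z * (Complex.exp (-Φ z) * Complex.exp (Φ z)) := by rw [h1]; ring
      _ = (h z * Complex.exp (-Φ z)) * Complex.exp (Φ z) := by ring
      _ = ((r : ℝ) : ℂ) * Complex.exp (Φ z) := by rw [hconst]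
  -- the cube root
  set L : ℂ → ℂ := fun z => (Φ z + ((Real.log r : ℝ) : ℂ)) / 3 with hL_def
  set G : ℂ → ℂ := fun z => z * Complex.exp (L z) with hG_def
  have hexp3 : ∀ z : ℂ, Complex.exp (L z) ^ 3 = Complex.exp (Φ z) * ((r : ℝ) : ℂ) := by
    intro z
    rw [← Complex.exp_nat_mul]
    have h3 : (3 : ℕ) * L z = Φ z + ((Real.log r : ℝ) : ℂ) := by
      rw [hL_def]
      push_cast
      ring
    rw [h3, Complex.exp_add, ← Complex.ofReal_exp, Real.exp_log hr]
  -- real values of h on ℝ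
  have hhx_im : ∀ x : ℝ, (h ((x : ℝ) : ℂ)).im = 0 := by
    intro x
    by_cases hx0 : x = 0
    · subst hx0
      rw [Complex.ofReal_zero, hh0, hc6]
      simp
    · have hx0' : ((x : ℝ) : ℂ) ≠ 0 := Complex.ofReal_ne_zero.mpr hx0
      simp only [hh_def, if_neg hx0']
      have hpow : ((x : ℝ) : ℂ) ^ 3 = ((x ^ 3 : ℝ) : ℂ) := by push_cast; ring
      rw [hpow, Complex.div_ofReal_im]
      have hF0 : (F 0).im = 0 := by
        have := hreal 0
        rwa [Complex.ofReal_zero] at this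
      rw [Complex.sub_im, hreal x, hF0]
      simp
  -- positivity of re h on ℝ
  set ρ : ℝ → ℝ := Complex.re ∘ h ∘ Complex.ofReal with hρ_def
  have hρc : Continuous ρ := by
    rw [continuous_iff_continuousAt]
    intro x
    have h1 : ContinuousAt h ((x : ℝ) : ℂ) :=
      (hhdiff.differentiableAt (hSo.mem_nhds (hxS x))).continuousAt
    exact Complex.continuous_re.continuousAt.comp
      (h1.comp Complex.continuous_ofReal.continuousAt)
  have hρ0 : ρ 0 = r := by
    have : ρ 0 = (h 0).re := by simp [hρ_def]
    rw [this, hh0, hc6]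
    simp
  have hρne : ∀ x : ℝ, ρ x ≠ 0 := by
    intro x hx0
    apply hh_ne _ (hxS x)
    apply Complex.ext
    · simpa [hρ_def] using hx0
    · simpa using hhx_im x
  have hρpos : ∀ x : ℝ, 0 < ρ x := by
    intro x
    rcases (hρne x).lt_or_gt with hlt | hgt
    · exfalso
      have hmem : (0 : ℝ) ∈ uIcc (ρ x) (ρ 0) := by
        rw [hρ0]
        exact mem_uIcc.mpr (Or.inl ⟨hlt.le, hr.le⟩)
      obtain ⟨y, _, hy⟩ := intermediate_value_uIcc (hρc.continuousOn) hmem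
      exact hρne y hy
    · exact hgt
  -- the imaginary part of Φ on ℝ vanishes
  set θ : ℝ → ℝ := Complex.im ∘ Φ ∘ Complex.ofReal with hθ_def
  have hθc : Continuous θ := by
    rw [continuous_iff_continuousAt]
    intro x
    have h1 : ContinuousAt Φ ((x : ℝ) : ℂ) :=
      ((hΦd _ (hxS x)).differentiableAt).continuousAt
    exact Complex.continuous_im.continuousAt.comp
      (h1.comp Complex.continuous_ofReal.continuousAt)
  have hθ0 : θ 0 = 0 := by
    have : θ 0 = (Φ 0).im := by simp [hθ_def]
    rw [this, hΦ0]
    simp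
  have htrig : ∀ x : ℝ, Real.sin (θ x) = 0 ∧ 0 < Real.cos (θ x) := by
    intro x
    have hx := hψ _ (hxS x)
    have him : (h ((x : ℝ) : ℂ)).im = r * (Complex.exp (Φ ((x : ℝ) : ℂ))).im := by
      rw [hx]
      simp [Complex.mul_im]
    have hre : (h ((x : ℝ) : ℂ)).re = r * (Complex.exp (Φ ((x : ℝ) : ℂ))).re := by
      rw [hx]
      simp [Complex.mul_re]
    have him0 : (Complex.exp (Φ ((x : ℝ) : ℂ))).im = 0 := by
      have := hhx_im x
      rw [him] at this
      exact (mul_eq_zero.mp this).resolve_left (ne_of_gt hr)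
    have hrepos : 0 < (Complex.exp (Φ ((x : ℝ) : ℂ))).re := by
      have := hρpos x
      have hρx : ρ x = (h ((x : ℝ) : ℂ)).re := by simp [hρ_def]
      rw [hρx, hre] at this
      nlinarith [hr]
    constructor
    · have := Complex.exp_im (Φ ((x : ℝ) : ℂ))
      rw [him0] at this
      have hexpne : Real.exp (Φ ((x : ℝ) : ℂ)).re ≠ 0 := Real.exp_ne_zero _
      have hsin := (mul_eq_zero.mp this.symm).resolve_left hexpne
      simpa [hθ_def] using hsin
    · have := Complex.exp_re (Φ ((x : ℝ) : ℂ))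
      rw [this] at hrepos
      have hexppos : 0 < Real.exp (Φ ((x : ℝ) : ℂ)).re := Real.exp_pos _
      have : 0 < Real.cos (Φ ((x : ℝ) : ℂ)).im := by
        by_contra hC
        push_neg at hC
        nlinarith
      simpa [hθ_def] using this
  have hθne : ∀ x : ℝ, θ x ≠ Real.pi ∧ θ x ≠ -Real.pi := by
    intro x
    have hcos := (htrig x).2
    constructor
    · intro hcontra
      rw [hcontra, Real.cos_pi] at hcos
      linarith
    · intro hcontra
      rw [hcontra, Real.cos_neg, Real.cos_pi] at hcos
      linarith
  have hθbd : ∀ x : ℝ, -Real.pi ≤ θ x ∧ θ x ≤ Real.pi := by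
    intro x
    constructor
    · by_contra hcontra
      push_neg at hcontra
      have hmem : -Real.pi ∈ uIcc (θ 0) (θ x) := by
        rw [hθ0]
        exact mem_uIcc.mpr (Or.inr ⟨hcontra.le, by linarith [Real.pi_pos]⟩)
      obtain ⟨y, _, hy⟩ := intermediate_value_uIcc (hθc.continuousOn) hmem
      exact (hθne y).2 hy
    · by_contra hcontra
      push_neg at hcontra
      have hmem : Real.pi ∈ uIcc (θ 0) (θ x) := by
        rw [hθ0]
        exact mem_uIcc.mpr (Or.inl ⟨Real.pi_pos.le, hcontra.le⟩)
      obtain ⟨y, _, hy⟩ := intermediate_value_uIcc (hθc.continuousOn) hmem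
      exact (hθne y).1 hy
  have hθzero : ∀ x : ℝ, θ x = 0 := by
    intro x
    obtain ⟨n, hn⟩ := Real.sin_eq_zero_iff.mp (htrig x).1
    obtain ⟨hlo, hhi⟩ := hθbd x
    have hne := hθne x
    have hn1 : (-1 : ℝ) ≤ (n : ℝ) := by nlinarith [Real.pi_pos]
    have hn2 : ((n : ℝ)) ≤ 1 := by nlinarith [Real.pi_pos]
    have hn1' : (-1 : ℤ) ≤ n := by exact_mod_cast hn1
    have hn2' : n ≤ 1 := by exact_mod_cast hn2
    interval_cases n
    · exfalso
      apply hne.2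
      rw [← hn]
      push_cast
      ring
    · rw [← hn]
      push_cast
      ring
    · exfalso
      apply hne.1
      rw [← hn]
      push_cast
      ring
  refine ⟨G, ?_, ?_, ?_, ?_, ?_, ?_⟩
  · -- differentiability
    intro z hz
    have h1 : DifferentiableAt ℂ L z := by
      simp only [hL_def]
      exact (((hΦd z hz).differentiableAt).add_const _).div_const _
    exact (differentiableAt_id.mul (h1.cexp)).differentiableWithinAt
  · -- cube
    intro z hz
    rw [hG_def]
    simp only
    rw [mul_pow, hexp3 z, ← mul_assoc]
    have := hmul z hz
    rw [← this, hψ z hz]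
    ring
  · -- real on ℝ
    intro x
    have hΦreal : (Φ ((x : ℝ) : ℂ)).im = 0 := by
      have := hθzero x
      simpa [hθ_def] using this
    have hLreal : L ((x : ℝ) : ℂ) = ((((Φ ((x : ℝ) : ℂ)).re + Real.log r) / 3 : ℝ) : ℂ) := by
      simp only [hL_def]
      apply Complex.ext
      · push_cast
        simp
      · push_cast
        simp [hΦreal]
    have hGx : G ((x : ℝ) : ℂ)
        = ((x * Real.exp (((Φ ((x : ℝ) : ℂ)).re + Real.log r) / 3) : ℝ) : ℂ) := by
      rw [hG_def]
      simp only
      rw [hLreal, ← Complex.ofReal_exp, ← Complex.ofReal_mul]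
    rw [hGx, Complex.ofReal_im]
  · -- G 0 = 0
    simp [hG_def]
  · -- deriv positivity
    have hE : HasDerivAt (fun z => Complex.exp (L z))
        (Complex.exp (L 0) * (φ 0 / 3)) 0 := by
      simp only [hL_def]
      exact ((((hΦd 0 h0S).add_const _).div_const 3)).cexp
    have hG' : HasDerivAt G (1 * Complex.exp (L 0) + 0 * (Complex.exp (L 0) * (φ 0 / 3))) 0 :=
      (hasDerivAt_id' (𝕜 := ℂ) 0).mul hE
    have hd : deriv G 0 = Complex.exp (L 0) := by
      rw [hG'.deriv]
      ring
    have hL0 : L 0 = (((Real.log r / 3 : ℝ)) : ℂ) := by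
      simp only [hL_def]
      rw [hΦ0]
      push_cast
      ring
    rw [hd, hL0, ← Complex.ofReal_exp, Complex.ofReal_re]
    exact Real.exp_pos _
  · have hE : HasDerivAt (fun z => Complex.exp (L z))
        (Complex.exp (L 0) * (φ 0 / 3)) 0 := by
      rw [hL_def]
      exact ((((hΦd 0 h0S).add_const _).div_const 3)).cexp
    have hG' : HasDerivAt G (1 * Complex.exp (L 0) + 0 * (Complex.exp (L 0) * (φ 0 / 3))) 0 :=
      (hasDerivAt_id' (𝕜 := ℂ) 0).mul hE
    have hd : deriv G 0 = Complex.exp (L 0) := by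
      rw [hG'.deriv]
      ring
    have hL0 : L 0 = (((Real.log r / 3 : ℝ)) : ℂ) := by
      simp only [hL_def]
      rw [hΦ0]
      push_cast
      ring
    rw [hd, hL0, ← Complex.ofReal_exp, Complex.ofReal_im]


end
end

section
/- Let f be a cubic critical circle map with irrational rotation number. Then there exists a constant c > 0, depending on f but not on n, such that for every n the arc f(I_n) has length at most c · M_n³, where I_n is the n-th closest-return arc and M_n = |I_n| its length. -/
open MeasureTheory Filter Metric Set Topology

noncomputable section

/-- Iterates of the Gauss map applied to (the fractional part of) a real number. -/
noncomputable def gaussIter (α : ℝ) : ℕ → ℝ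
  | 0 => Int.fract α
  | n + 1 => Int.fract (gaussIter α n)⁻¹

/-- The continued fraction partial quotients of α: `cfCoeff α (n-1)` is the coefficient
`aₙ` in `α = [a₁, a₂, …]`. -/
noncomputable def cfCoeff (α : ℝ) (n : ℕ) : ℕ := ⌊(gaussIter α n)⁻¹⌋₊

/-- The denominators `qₙ` of the continued fraction convergents of α:
`q₀ = 1`, `q₁ = a₁`, `q_{n+2} = a_{n+2} q_{n+1} + q_n`. -/
noncomputable def cfDenom (α : ℝ) : ℕ → ℕ
  | 0 => 1
  | 1 => cfCoeff α 0
  | (n + 2) => cfCoeff α (n + 1) * cfDenom α (n + 1) + cfDenom α n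

/-- The representative of a real number modulo 1 that is nearest to 0. -/
noncomputable def nearestRep (t : ℝ) : ℝ := t - round t

private lemma iterDW_eq (f : ℝ → ℝ) (hf : ContDiff ℝ ⊤ f) {s : Set ℝ}
    (hs : UniqueDiffOn ℝ s) {x : ℝ} (hx : x ∈ s) (n : ℕ) :
    iteratedDerivWithin n f s x = iteratedDeriv n f x := by
  rw [iteratedDerivWithin_eq_iteratedFDerivWithin, iteratedDeriv_eq_iteratedFDeriv]
  congr 1
  have hf' : ContDiff ℝ ((⊤ : ℕ∞) : WithTop ℕ∞) f := hf.of_le le_top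
  have h := (contDiff_iff_ftaylorSeries (n := (⊤ : ℕ∞))).1 hf'
  exact ((h.hasFTaylorSeriesUpToOn s).eq_iteratedFDerivWithin_of_uniqueDiffOn (by exact_mod_cast le_top) hs hx).symm

private lemma cubic_taylor_bound_pos (f : ℝ → ℝ) (hf : ContDiff ℝ ⊤ f)
    (h1 : deriv f 0 = 0) (h2 : iteratedDeriv 2 f 0 = 0) (C : ℝ)
    (hC : ∀ t : ℝ, |t| ≤ 1/2 → |iteratedDeriv 3 f t| ≤ C)
    {x : ℝ} (hx0 : 0 < x) (hx : x ≤ 1/2) :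
    |f x - f 0| ≤ C / 6 * x ^ 3 := by
  obtain ⟨x', hx', heq⟩ := taylor_mean_remainder_lagrange (f := f) (n := 2) hx0.ne
    (by rw [uIcc_of_le hx0.le]; exact hf.contDiffOn.of_le le_top)
    (by
      rw [uIcc_of_le hx0.le, uIoo_of_le hx0.le]
      exact (hf.differentiable_iteratedDeriv 2 (Ne.lt_top (by simp))).differentiableOn.congr
        (fun y hy => iterDW_eq f hf (uniqueDiffOn_Icc hx0) (Ioo_subset_Icc_self hy) 2))
  rw [uIcc_of_le hx0.le] at heq
  rw [uIoo_of_le hx0.le] at hx'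
  have hT : taylorWithinEval f 2 (Icc 0 x) 0 x = f 0 := by
    rw [taylor_within_apply]
    have e0 : iteratedDerivWithin 0 f (Icc 0 x) 0 = f 0 := by
      rw [iterDW_eq f hf (uniqueDiffOn_Icc hx0) (left_mem_Icc.2 hx0.le)]; simp
    have e1 : iteratedDerivWithin 1 f (Icc 0 x) 0 = 0 := by
      rw [iterDW_eq f hf (uniqueDiffOn_Icc hx0) (left_mem_Icc.2 hx0.le), iteratedDeriv_one, h1]
    have e2 : iteratedDerivWithin 2 f (Icc 0 x) 0 = 0 := by
      rw [iterDW_eq f hf (uniqueDiffOn_Icc hx0) (left_mem_Icc.2 hx0.le), h2]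
    simp [Finset.sum_range_succ, e0, e1, e2]
  rw [hT] at heq
  rw [heq]
  have hx'' : iteratedDerivWithin 3 f (Icc 0 x) x' = iteratedDeriv 3 f x' :=
    iterDW_eq f hf (uniqueDiffOn_Icc hx0) (Ioo_subset_Icc_self hx') 3
  have hb : |iteratedDeriv 3 f x'| ≤ C := by
    apply hC
    rw [abs_of_pos hx'.1]
    exact le_trans hx'.2.le hx
  rw [hx'']
  simp only [sub_zero]
  rw [abs_div, abs_mul, abs_pow, abs_of_pos hx0]
  have hfac : |(((2+1).factorial : ℕ) : ℝ)| = 6 := by norm_num [Nat.factorial]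
  rw [hfac, div_le_iff₀ (by norm_num : (0:ℝ) < 6)]
  nlinarith [pow_pos hx0 3, abs_nonneg (iteratedDeriv 3 f x')]

variable (F : ℝ → ℝ)

private lemma cubic_global_bound (hf : ContDiff ℝ ⊤ F)
    (h1 : deriv F 0 = 0) (h2 : iteratedDeriv 2 F 0 = 0) :
    ∃ c : ℝ, 0 < c ∧ ∀ x : ℝ, |x| ≤ 1/2 → |F x - F 0| ≤ c * |x| ^ 3 := by
  have hcont : Continuous (iteratedDeriv 3 F) := hf.continuous_iteratedDeriv 3 le_top
  obtain ⟨C, hC3⟩ := (isCompact_Icc (a := (-(1/2) : ℝ)) (b := 1/2)).exists_bound_of_continuousOn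
    hcont.continuousOn
  have hC' : ∀ t : ℝ, |t| ≤ 1/2 → |iteratedDeriv 3 F t| ≤ C := by
    intro t ht
    exact hC3 t (abs_le.1 ht)
  have hCnn : 0 ≤ C := le_trans (abs_nonneg _) (hC' 0 (by norm_num))
  refine ⟨C / 6 + 1, by positivity, fun x hx => ?_⟩
  have key : |F x - F 0| ≤ C / 6 * |x| ^ 3 := by
    rcases lt_trichotomy x 0 with hneg | hzero | hpos
    · set G : ℝ → ℝ := fun t => F (-t) with hG
      have hGc : ContDiff ℝ ⊤ G := hf.comp contDiff_neg
      have hG1 : deriv G 0 = 0 := by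
        have := iteratedDeriv_comp_neg 1 F 0
        simpa [hG, iteratedDeriv_one, h1] using this
      have hG2 : iteratedDeriv 2 G 0 = 0 := by
        have := iteratedDeriv_comp_neg 2 F 0
        simpa [hG, h2] using this
      have hGC : ∀ t : ℝ, |t| ≤ 1/2 → |iteratedDeriv 3 G t| ≤ C := by
        intro t ht
        have := iteratedDeriv_comp_neg 3 F t
        rw [hG, this]
        rw [show ((-1 : ℝ) ^ 3 : ℝ) = -1 by norm_num]
        rw [neg_one_smul, abs_neg]
        exact hC' (-t) (by rwa [abs_neg])
      have hb := cubic_taylor_bound_pos G hGc hG1 hG2 C hGC (x := -x)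
        (by linarith) (by rw [abs_of_neg hneg] at hx; linarith)
      simp only [hG, neg_neg, neg_zero] at hb
      calc |F x - F 0| ≤ C / 6 * (-x) ^ 3 := hb
        _ = C / 6 * |x| ^ 3 := by rw [abs_of_neg hneg]
    · subst hzero
      simp
    · have hb := cubic_taylor_bound_pos F hf h1 h2 C hC' hpos
        (by rwa [abs_of_pos hpos] at hx)
      rwa [abs_of_pos hpos]
  calc |F x - F 0| ≤ C / 6 * |x| ^ 3 := key
    _ ≤ (C / 6 + 1) * |x| ^ 3 := by nlinarith [abs_nonneg x, pow_nonneg (abs_nonneg x) 3]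

/-- For a cubic critical circle map `f` (lift `F`) with irrational rotation
number there is a constant `c > 0` such that for every `n` the arc `f(Iₙ)` has length at most
`c · Mₙ³`, where `Iₙ` is the `n`-th closest return arc, with endpoints `0` and `f^{qₙ}(0)`
(represented on the real line by the representative of `F^[qₙ] 0` nearest to `0`), and
`Mₙ = |Iₙ|`. -/
theorem image_of_closest_return_arc_cubic_bound (F : ℝ → ℝ)
    (hF : IsCubicCriticalCircleMap F)
    (hirr : Irrational (rotationNumber F))
    (q : ℕ → ℕ) (hq : q = cfDenom (rotationNumber F)) :
    ∃ c : ℝ, 0 < c ∧ ∀ n : ℕ,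
      |F (nearestRep (F^[q n] 0)) - F 0| ≤ c * |nearestRep (F^[q n] 0)| ^ 3 := by
  have hC : ContDiff ℝ ⊤ F := contDiff_iff_contDiffAt.2 fun x => (hF.analytic x).contDiffAt
  obtain ⟨c, hc, hbound⟩ := cubic_global_bound F hC hF.deriv_zero hF.deriv2_zero
  exact ⟨c, hc, fun n => hbound _ (by rw [nearestRep]; exact abs_sub_round _)⟩


end
end
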